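/- arXiv:1203.4436 — 7 statements merged into one kernel-verified Lean document; each statement's English description precedes it below -/
import Mathlib

section
/- Let α: I → ℝ³ be a unit speed slant helix with curvature κ > 0, torsion τ, Frenet frame (T, N, B), axis d (a unit vector) and constant angle θ with ⟨N, d⟩ = cos θ. If c := ⟨B, d⟩, then c² (τ²/κ² + 1) = sin²θ, i.e. c = ∓ (κ/√(κ²+τ²)) sin θ. -/
noncomputable section

/-- For a unit speed slant helix with axis `d` and constant angle `θ`,
the quantity `c = ⟨B, d⟩` satisfies `c² (τ²/κ² + 1) = sin² θ`. -/
theorem slant_helix_binormal_component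
    (I : Set ℝ) (hI : IsOpen I)
    (T N B : ℝ → EuclideanSpace ℝ (Fin 3)) (κ τ : ℝ → ℝ)
    (hκpos : ∀ s ∈ I, 0 < κ s)
    (hTunit : ∀ s ∈ I, ‖T s‖ = 1) (hNunit : ∀ s ∈ I, ‖N s‖ = 1)
    (hBunit : ∀ s ∈ I, ‖B s‖ = 1)
    (hTN : ∀ s ∈ I, (inner ℝ (T s) (N s) : ℝ) = 0)
    (hTB : ∀ s ∈ I, (inner ℝ (T s) (B s) : ℝ) = 0)
    (hNB : ∀ s ∈ I, (inner ℝ (N s) (B s) : ℝ) = 0)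
    (hspan : ∀ s ∈ I, ∀ v : EuclideanSpace ℝ (Fin 3),
      v = (inner ℝ (T s) v : ℝ) • T s + (inner ℝ (N s) v : ℝ) • N s
        + (inner ℝ (B s) v : ℝ) • B s)
    (hT : ∀ s ∈ I, HasDerivAt T (κ s • N s) s)
    (hN : ∀ s ∈ I, HasDerivAt N (-(κ s) • T s + τ s • B s) s)
    (hB : ∀ s ∈ I, HasDerivAt B (-(τ s) • N s) s)
    (d : EuclideanSpace ℝ (Fin 3)) (hd : ‖d‖ = 1) (θ : ℝ)
    (hangle : ∀ s ∈ I, (inner ℝ (N s) d : ℝ) = Real.cos θ) :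
    ∀ s ∈ I, (inner ℝ (B s) d : ℝ) ^ 2 * ((τ s) ^ 2 / (κ s) ^ 2 + 1)
      = Real.sin θ ^ 2 := by
  intro s hs
  have hκ := hκpos s hs
  set t : ℝ := inner ℝ (T s) d with ht
  set c : ℝ := inner ℝ (B s) d with hc
  -- derivative of ⟨N, d⟩ is zero since it is locally constant
  have hder : HasDerivAt (fun u => (inner ℝ (N u) d : ℝ))
      ((inner ℝ (N s) (0 : EuclideanSpace ℝ (Fin 3)) : ℝ)
        + (inner ℝ (-(κ s) • T s + τ s • B s) d : ℝ)) s :=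
    (hN s hs).inner ℝ (hasDerivAt_const s d)
  have hconst : HasDerivAt (fun u => (inner ℝ (N u) d : ℝ)) 0 s := by
    have : (fun u => (inner ℝ (N u) d : ℝ)) =ᶠ[nhds s] fun _ => Real.cos θ :=
      Filter.eventuallyEq_of_mem (hI.mem_nhds hs) (fun u hu => hangle u hu)
    exact (hasDerivAt_const s (Real.cos θ)).congr_of_eventuallyEq this
  have hzero : -(κ s) * t + τ s * c = 0 := by
    have := hder.unique hconst
    simpa [inner_add_left, inner_smul_left, real_inner_comm (T s) d,
      real_inner_comm (B s) d, ← ht, ← hc] using this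
  -- pythagorean identity
  have hdd : t ^ 2 + Real.cos θ ^ 2 + c ^ 2 = 1 := by
    have hexp := hspan s hs d
    have h1 : (inner ℝ d d : ℝ) = 1 := by
      rw [real_inner_self_eq_norm_sq, hd]; norm_num
    rw [hangle s hs] at hexp
    calc t ^ 2 + Real.cos θ ^ 2 + c ^ 2
        = (inner ℝ (t • T s + Real.cos θ • N s + c • B s) d : ℝ) := by
          simp [inner_add_left, inner_smul_left, ← ht, ← hc, hangle s hs]
          ring
      _ = 1 := by rw [← hexp, h1]
  have hsin : Real.sin θ ^ 2 = t ^ 2 + c ^ 2 := by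
    have := Real.sin_sq_add_cos_sq θ
    nlinarith
  have hκne : κ s ≠ 0 := ne_of_gt hκ
  have htc : t = τ s * c / κ s := by
    field_simp
    linarith
  rw [hsin, htc]
  field_simp
end
end

section
/- Let α: I → ℝ³ be a unit speed slant helix with κ > 0, torsion τ, and constant angle θ between the principal normal N and the fixed unit axis d. Then the axis can be written as d = ∓ (τ/√(κ²+τ²)) sin θ · T + cos θ · N ∓ (κ/√(κ²+τ²)) sin θ · B. -/
noncomputable section

/-- The axis of a unit speed slant helix can be written as
`d = ∓ (τ/√(κ²+τ²)) sin θ T + cos θ N ∓ (κ/√(κ²+τ²)) sin θ B`. -/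
theorem slant_helix_axis_formula
    (I : Set ℝ) (hI : IsOpen I)
    (T N B : ℝ → EuclideanSpace ℝ (Fin 3)) (κ τ : ℝ → ℝ)
    (hκpos : ∀ s ∈ I, 0 < κ s)
    (hTunit : ∀ s ∈ I, ‖T s‖ = 1) (hNunit : ∀ s ∈ I, ‖N s‖ = 1)
    (hBunit : ∀ s ∈ I, ‖B s‖ = 1)
    (hTN : ∀ s ∈ I, (inner ℝ (T s) (N s) : ℝ) = 0)
    (hTB : ∀ s ∈ I, (inner ℝ (T s) (B s) : ℝ) = 0)
    (hNB : ∀ s ∈ I, (inner ℝ (N s) (B s) : ℝ) = 0)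
    (hspan : ∀ s ∈ I, ∀ v : EuclideanSpace ℝ (Fin 3),
      v = (inner ℝ (T s) v : ℝ) • T s + (inner ℝ (N s) v : ℝ) • N s
        + (inner ℝ (B s) v : ℝ) • B s)
    (hT : ∀ s ∈ I, HasDerivAt T (κ s • N s) s)
    (hN : ∀ s ∈ I, HasDerivAt N (-(κ s) • T s + τ s • B s) s)
    (hB : ∀ s ∈ I, HasDerivAt B (-(τ s) • N s) s)
    (d : EuclideanSpace ℝ (Fin 3)) (hd : ‖d‖ = 1) (θ : ℝ)
    (hangle : ∀ s ∈ I, (inner ℝ (N s) d : ℝ) = Real.cos θ)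
    (hconn : Convex ℝ I) :
    ∃ ε : ℝ, (ε = 1 ∨ ε = -1) ∧ ∀ s ∈ I,
      d = (ε * (τ s / Real.sqrt ((κ s) ^ 2 + (τ s) ^ 2)) * Real.sin θ) • T s
        + Real.cos θ • N s
        + (ε * (κ s / Real.sqrt ((κ s) ^ 2 + (τ s) ^ 2)) * Real.sin θ) • B s := by
  set a : ℝ → ℝ := fun s => (inner ℝ (T s) d : ℝ) with ha
  set c : ℝ → ℝ := fun s => (inner ℝ (B s) d : ℝ) with hc
  -- derivative of ⟪N, d⟫ is zero
  have hkey : ∀ s ∈ I, κ s * a s = τ s * c s := by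
    intro s hs
    have h1 : HasDerivAt (fun u => (inner ℝ (N u) d : ℝ))
        ((inner ℝ (N s) (0:EuclideanSpace ℝ (Fin 3)) : ℝ)
          + (inner ℝ (-(κ s) • T s + τ s • B s) d : ℝ)) s :=
      (hN s hs).inner ℝ (hasDerivAt_const s d)
    have h2 : HasDerivAt (fun u => (inner ℝ (N u) d : ℝ)) 0 s := by
      have : (fun u => (inner ℝ (N u) d : ℝ)) =ᶠ[nhds s] fun _ => Real.cos θ := by
        filter_upwards [hI.mem_nhds hs] with u hu using hangle u hu
      exact (hasDerivAt_const s (Real.cos θ)).congr_of_eventuallyEq this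
    have h3 := h1.unique h2
    simp only [inner_zero_right, inner_add_left, real_inner_smul_left, zero_add] at h3
    have := hangle s hs
    nlinarith [h3]
  have hnorm : ∀ s ∈ I, a s ^ 2 + Real.cos θ ^ 2 + c s ^ 2 = 1 := by
    intro s hs
    have hdd : (inner ℝ d d : ℝ) = 1 := by
      rw [real_inner_self_eq_norm_sq, hd]; norm_num
    have hx := hspan s hs d
    calc a s ^ 2 + Real.cos θ ^ 2 + c s ^ 2
        = (inner ℝ ((inner ℝ (T s) d : ℝ) • T s + (inner ℝ (N s) d : ℝ) • N s
            + (inner ℝ (B s) d : ℝ) • B s) d : ℝ) := by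
          simp only [inner_add_left, real_inner_smul_left, hangle s hs]
          ring
      _ = (inner ℝ d d : ℝ) := by rw [← hx]
      _ = 1 := hdd
  by_cases hsin : Real.sin θ = 0
  · refine ⟨1, Or.inl rfl, fun s hs => ?_⟩
    have hcos : Real.cos θ ^ 2 = 1 := by
      have := Real.sin_sq_add_cos_sq θ
      rw [hsin] at this; nlinarith
    have h0 : a s = 0 ∧ c s = 0 := by
      constructor <;> nlinarith [hnorm s hs, sq_nonneg (a s), sq_nonneg (c s)]
    have hA : (inner ℝ (T s) d : ℝ) = 0 := h0.1
    have hC : (inner ℝ (B s) d : ℝ) = 0 := h0.2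
    have hx := hspan s hs d
    rw [hangle s hs, hA, hC] at hx
    simpa [hsin] using hx
  · -- sin θ ≠ 0
    rcases Set.eq_empty_or_nonempty I with hIe | ⟨s₀, hs₀⟩
    · exact ⟨1, Or.inl rfl, fun s hs => absurd hs (by simp [hIe])⟩
    have hsin2 : 0 < Real.sin θ ^ 2 := by positivity
    have hsum : ∀ s ∈ I, a s ^ 2 + c s ^ 2 = Real.sin θ ^ 2 := by
      intro s hs
      have := hnorm s hs
      have := Real.sin_sq_add_cos_sq θ
      nlinarith
    have hcsq : ∀ s ∈ I, (κ s ^ 2 + τ s ^ 2) * c s ^ 2 = κ s ^ 2 * Real.sin θ ^ 2 := by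
      intro s hs
      have h1 := hkey s hs
      have h2 := hsum s hs
      have h3 : (τ s * c s) ^ 2 = (κ s * a s) ^ 2 := by rw [h1]
      linear_combination h3 + κ s ^ 2 * h2
    have hcne : ∀ s ∈ I, c s ≠ 0 := by
      intro s hs h0
      have h2 := hcsq s hs
      rw [h0] at h2
      nlinarith [mul_pos (pow_pos (hκpos s hs) 2) hsin2]
    set ε : ℝ := if 0 < c s₀ * Real.sin θ then 1 else -1 with hε
    have hε1 : ε = 1 ∨ ε = -1 := by unfold ε; split <;> simp
    have hε0 : 0 < ε * c s₀ * Real.sin θ := by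
      unfold ε
      rcases lt_trichotomy (c s₀ * Real.sin θ) 0 with h | h | h
      · rw [if_neg (by linarith)]; nlinarith
      · exact absurd h (by have := hcne s₀ hs₀; positivity)
      · rw [if_pos h]; nlinarith
    -- continuity + sign constancy
    have hcont : ∀ s ∈ I, ContinuousAt c s := by
      intro s hs
      exact ((hB s hs).continuousAt).inner continuousAt_const
    have hpos : ∀ s ∈ I, 0 < ε * c s * Real.sin θ := by
      intro s hs
      by_contra hcon
      push_neg at hcon
      have hne : ε * c s * Real.sin θ ≠ 0 := by
        have := hcne s hs
        rcases hε1 with h | h <;> rw [h] <;> simp [this, hsin]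
      have hneg : ε * c s * Real.sin θ < 0 := lt_of_le_of_ne hcon hne
      -- IVT between s₀ and s
      set f : ℝ → ℝ := fun u => ε * c u * Real.sin θ with hf
      have hsub : ∀ u₁ u₂ : ℝ, u₁ ∈ I → u₂ ∈ I → Set.Icc u₁ u₂ ⊆ I := by
        intro u₁ u₂ h1 h2
        exact hconn.ordConnected.out h1 h2
      have hcf : ∀ u₁ u₂ : ℝ, u₁ ∈ I → u₂ ∈ I → ContinuousOn f (Set.Icc u₁ u₂) := by
        intro u₁ u₂ h1 h2 u hu
        exact (((hcont u (hsub u₁ u₂ h1 h2 hu)).const_smul ε).mul continuousAt_const).continuousWithinAt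
      rcases le_total s₀ s with hle | hle
      · have : (0:ℝ) ∈ Set.Icc (f s) (f s₀) := ⟨hneg.le, hε0.le⟩
        have := intermediate_value_Icc' hle (hcf s₀ s hs₀ hs) this
        obtain ⟨u, hu, hu0⟩ := this
        exact absurd hu0.symm (by
          have := hcne u (hsub s₀ s hs₀ hs hu)
          rcases hε1 with h | h <;> simp [hf, h, this, hsin])
      · have : (0:ℝ) ∈ Set.Icc (f s) (f s₀) := ⟨hneg.le, hε0.le⟩
        have := intermediate_value_Icc hle (hcf s s₀ hs hs₀) this
        obtain ⟨u, hu, hu0⟩ := this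
        exact absurd hu0.symm (by
          have := hcne u (hsub s s₀ hs hs₀ hu)
          rcases hε1 with h | h <;> simp [hf, h, this, hsin])
    refine ⟨ε, hε1, fun s hs => ?_⟩
    set r : ℝ := Real.sqrt (κ s ^ 2 + τ s ^ 2) with hr
    have hκ := hκpos s hs
    have hrpos : 0 < r := Real.sqrt_pos.2 (by positivity)
    have hr2 : r ^ 2 = κ s ^ 2 + τ s ^ 2 := Real.sq_sqrt (by positivity)
    have hcr : c s * r = ε * κ s * Real.sin θ := by
      have h1 : (c s * r) ^ 2 = (κ s * Real.sin θ) ^ 2 := by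
        have := hcsq s hs; nlinarith
      have h2 := hpos s hs
      have hfac : (c s * r - κ s * Real.sin θ) * (c s * r + κ s * Real.sin θ) = 0 := by
        linear_combination h1
      rcases mul_eq_zero.1 hfac with h' | h'
      · -- c s * r = κ s * sin θ, so c s * sin θ > 0 forces ε = 1
        have hcsr : c s * Real.sin θ * r = κ s * Real.sin θ ^ 2 := by
          linear_combination Real.sin θ * h'
        have hcs : 0 < c s * Real.sin θ := by
          nlinarith [mul_pos hκ hsin2, hrpos, hcsr]
        rcases hε1 with h | h <;> rw [h] at h2 ⊢
        · linarith [h']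
        · exact absurd hcs (by linarith)
      · have hcsr : c s * Real.sin θ * r = -(κ s * Real.sin θ ^ 2) := by
          linear_combination Real.sin θ * h'
        rcases hε1 with h | h <;> rw [h] at h2 ⊢ <;>
          nlinarith [mul_pos hκ hsin2, mul_pos (mul_pos hκ hsin2) hrpos]
    have hcval : c s = ε * (κ s / r) * Real.sin θ := by
      field_simp
      linear_combination hcr
    have haval : a s = ε * (τ s / r) * Real.sin θ := by
      have h1 := hkey s hs
      rw [hcval] at h1
      have : κ s * a s = κ s * (ε * (τ s / r) * Real.sin θ) := by
        rw [h1]; ring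
      exact mul_left_cancel₀ (ne_of_gt hκ) this
    have hx := hspan s hs d
    rw [hangle s hs] at hx
    rw [← haval, ← hcval]
    exact hx
end
end

section
/- Let α: I → ℝ³ be a unit speed slant helix with κ > 0, torsion τ, axis d given by d = ∓ (τ/√(κ²+τ²)) sin θ T + cos θ N ∓ (κ/√(κ²+τ²)) sin θ B, and ⟨N'', d⟩ = 0. Then cot θ = ∓ (κ²/(κ²+τ²)^{3/2}) (τ/κ)'. -/
noncomputable section

/-- If the axis `d` of a unit speed slant helix is given by
`d = ∓ (τ/√(κ²+τ²)) sin θ T + cos θ N ∓ (κ/√(κ²+τ²)) sin θ B` and `⟨N'', d⟩ = 0`,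
then `cot θ = ∓ (κ²/(κ²+τ²)^{3/2}) (τ/κ)'`. -/
theorem slant_helix_cot_angle
    (I : Set ℝ) (hI : IsOpen I)
    (T N B : ℝ → EuclideanSpace ℝ (Fin 3)) (κ τ κ' τ' : ℝ → ℝ)
    (hκpos : ∀ s ∈ I, 0 < κ s)
    (hTunit : ∀ s ∈ I, ‖T s‖ = 1) (hNunit : ∀ s ∈ I, ‖N s‖ = 1)
    (hBunit : ∀ s ∈ I, ‖B s‖ = 1)
    (hTN : ∀ s ∈ I, (inner ℝ (T s) (N s) : ℝ) = 0)
    (hTB : ∀ s ∈ I, (inner ℝ (T s) (B s) : ℝ) = 0)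
    (hNB : ∀ s ∈ I, (inner ℝ (N s) (B s) : ℝ) = 0)
    (hT : ∀ s ∈ I, HasDerivAt T (κ s • N s) s)
    (hN : ∀ s ∈ I, HasDerivAt N (-(κ s) • T s + τ s • B s) s)
    (hB : ∀ s ∈ I, HasDerivAt B (-(τ s) • N s) s)
    (hκ' : ∀ s ∈ I, HasDerivAt κ (κ' s) s)
    (hτ' : ∀ s ∈ I, HasDerivAt τ (τ' s) s)
    (d : EuclideanSpace ℝ (Fin 3)) (θ : ℝ) (hθ : Real.sin θ ≠ 0)
    (ε : ℝ) (hε : ε = 1 ∨ ε = -1)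
    (haxis : ∀ s ∈ I,
      d = (ε * (τ s / Real.sqrt ((κ s) ^ 2 + (τ s) ^ 2)) * Real.sin θ) • T s
        + Real.cos θ • N s
        + (ε * (κ s / Real.sqrt ((κ s) ^ 2 + (τ s) ^ 2)) * Real.sin θ) • B s)
    (hNdd : ∀ s ∈ I,
      (inner ℝ (-(κ' s) • T s - ((κ s) ^ 2 + (τ s) ^ 2) • N s + τ' s • B s) d : ℝ)
        = 0) :
    ∀ s ∈ I, Real.cos θ / Real.sin θ
      = ε * ((κ s) ^ 2 / Real.sqrt (((κ s) ^ 2 + (τ s) ^ 2) ^ 3))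
          * ((τ' s * κ s - κ' s * τ s) / (κ s) ^ 2) := by
  intro s hs
  have hκ := hκpos s hs
  have hr2 : (0:ℝ) < (κ s)^2 + (τ s)^2 := by positivity
  set r := Real.sqrt ((κ s)^2 + (τ s)^2) with hr
  have hrpos : 0 < r := Real.sqrt_pos.mpr hr2
  have hrsq : r^2 = (κ s)^2 + (τ s)^2 := Real.sq_sqrt hr2.le
  have hcube : Real.sqrt (((κ s)^2 + (τ s)^2)^3) = r^3 := by
    rw [show (((κ s)^2 + (τ s)^2)^3) = (r^3)^2 by rw [← hrsq]; ring]
    exact Real.sqrt_sq (by positivity)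
  have hTT : (inner ℝ (T s) (T s) : ℝ) = 1 := by
    rw [real_inner_self_eq_norm_sq, hTunit s hs]; norm_num
  have hNN : (inner ℝ (N s) (N s) : ℝ) = 1 := by
    rw [real_inner_self_eq_norm_sq, hNunit s hs]; norm_num
  have hBB : (inner ℝ (B s) (B s) : ℝ) = 1 := by
    rw [real_inner_self_eq_norm_sq, hBunit s hs]; norm_num
  have hNT : (inner ℝ (N s) (T s) : ℝ) = 0 := by
    rw [real_inner_comm]; exact hTN s hs
  have hBT : (inner ℝ (B s) (T s) : ℝ) = 0 := by
    rw [real_inner_comm]; exact hTB s hs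
  have hBN : (inner ℝ (B s) (N s) : ℝ) = 0 := by
    rw [real_inner_comm]; exact hNB s hs
  have hE := hNdd s hs
  rw [haxis s hs] at hE
  simp only [inner_add_left, inner_add_right, inner_sub_left, inner_smul_left,
    inner_smul_right, real_inner_smul_left, real_inner_smul_right,
    hTT, hNN, hBB, hNT, hBT, hBN, hTN s hs, hTB s hs, hNB s hs,
    RCLike.inner_apply, conj_trivial] at hE
  -- hE : -κ' * (ε τ/r sinθ) - (κ²+τ²) cosθ + τ' * (ε κ/r sinθ) = 0
  rw [hcube]
  have hκne : κ s ≠ 0 := ne_of_gt hκ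
  have hrne : r ≠ 0 := ne_of_gt hrpos
  field_simp at hE ⊢
  rw [← hr] at hE
  linear_combination (-1) * hE + Real.cos θ * r * hrsq
end
end

section
/- Let κ, τ: I → ℝ be smooth with κ > 0 and κ² + τ² > 0, let (T, N, B) satisfy the Frenet equations T' = κN, N' = -κT + τB, B' = -τN, and suppose tan θ = ∓ (κ²+τ²)^{3/2}/(τ'κ - κ'τ) with τ'κ - κ'τ never zero. Then the vector field d = ∓ (τ/√(κ²+τ²)) sin θ T + cos θ N ∓ (κ/√(κ²+τ²)) sin θ B satisfies d' = 0, i.e. d is constant. -/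
noncomputable section

/-- If `tan θ = ∓ (κ²+τ²)^{3/2}/(τ'κ - κ'τ)`, then the vector field
`d = ∓ (τ/√(κ²+τ²)) sin θ T + cos θ N ∓ (κ/√(κ²+τ²)) sin θ B` has vanishing
derivative, i.e. it is constant. -/
theorem slant_helix_axis_is_constant
    (I : Set ℝ) (hI : IsOpen I)
    (T N B : ℝ → EuclideanSpace ℝ (Fin 3)) (κ τ κ' τ' : ℝ → ℝ)
    (hκpos : ∀ s ∈ I, 0 < κ s)
    (hκτpos : ∀ s ∈ I, 0 < (κ s) ^ 2 + (τ s) ^ 2)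
    (hT : ∀ s ∈ I, HasDerivAt T (κ s • N s) s)
    (hN : ∀ s ∈ I, HasDerivAt N (-(κ s) • T s + τ s • B s) s)
    (hB : ∀ s ∈ I, HasDerivAt B (-(τ s) • N s) s)
    (hκ' : ∀ s ∈ I, HasDerivAt κ (κ' s) s)
    (hτ' : ∀ s ∈ I, HasDerivAt τ (τ' s) s)
    (hW : ∀ s ∈ I, τ' s * κ s - κ' s * τ s ≠ 0)
    (θ : ℝ) (ε : ℝ) (hε : ε = 1 ∨ ε = -1)
    (htan : ∀ s ∈ I, Real.tan θ
      = ε * Real.sqrt (((κ s) ^ 2 + (τ s) ^ 2) ^ 3) / (τ' s * κ s - κ' s * τ s)) :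
    ∀ s ∈ I, HasDerivAt (fun u =>
      (ε * (τ u / Real.sqrt ((κ u) ^ 2 + (τ u) ^ 2)) * Real.sin θ) • T u
        + Real.cos θ • N u
        + (ε * (κ u / Real.sqrt ((κ u) ^ 2 + (τ u) ^ 2)) * Real.sin θ) • B u)
      (0 : EuclideanSpace ℝ (Fin 3)) s := by
  intro s hs
  have hε2 : ε ^ 2 = 1 := by rcases hε with h | h <;> simp [h]
  have hP : 0 < κ s ^ 2 + τ s ^ 2 := hκτpos s hs
  set r := Real.sqrt (κ s ^ 2 + τ s ^ 2) with hrdef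
  have hrpos : 0 < r := Real.sqrt_pos.mpr hP
  have hrne : r ≠ 0 := ne_of_gt hrpos
  have hr2 : r ^ 2 = κ s ^ 2 + τ s ^ 2 := Real.sq_sqrt hP.le
  have hWs := hW s hs
  have hsqrtcube : Real.sqrt ((κ s ^ 2 + τ s ^ 2) ^ 3) = r ^ 3 := by
    rw [show (κ s ^ 2 + τ s ^ 2) ^ 3 = (r ^ 3) ^ 2 by rw [← hr2]; ring]
    exact Real.sqrt_sq (by positivity)
  -- cos θ ≠ 0
  have hcos : Real.cos θ ≠ 0 := by
    intro h
    have h1 := htan s hs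
    rw [Real.tan_eq_sin_div_cos, h, div_zero, hsqrtcube] at h1
    have h2 : ε * r ^ 3 / (τ' s * κ s - κ' s * τ s) ≠ 0 := by
      apply div_ne_zero _ hWs
      rcases hε with h' | h' <;> (rw [h']; intro hc; nlinarith)
    exact h2 h1.symm
  -- the key relation coming from the tan θ hypothesis
  have hkey : Real.sin θ * (τ' s * κ s - κ' s * τ s) = ε * Real.cos θ * r ^ 3 := by
    have h1 := htan s hs
    rw [Real.tan_eq_sin_div_cos, hsqrtcube] at h1
    field_simp at h1
    linarith [h1]
  -- derivative of √(κ²+τ²)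
  have hrd : HasDerivAt (fun u => Real.sqrt (κ u ^ 2 + τ u ^ 2))
      ((κ s * κ' s + τ s * τ' s) / r) s := by
    have h := (((hκ' s hs).pow 2).add ((hτ' s hs).pow 2)).sqrt (ne_of_gt hP)
    convert h using 1
    · rfl
    simp only [Pi.add_apply, Pi.pow_apply]
    rw [← hrdef]
    field_simp
    ring
  -- derivative of τ/√(κ²+τ²)
  have hfd : HasDerivAt (fun u => τ u / Real.sqrt (κ u ^ 2 + τ u ^ 2))
      (κ s * (τ' s * κ s - κ' s * τ s) / r ^ 3) s := by
    have hnum : τ' s * r - τ s * ((κ s * κ' s + τ s * τ' s) / r)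
        = κ s * (τ' s * κ s - κ' s * τ s) / r := by
      field_simp
      linear_combination τ' s * hr2
    have h := (hτ' s hs).div hrd hrne
    convert h using 1
    · rfl
    · rfl
    · rfl
    rw [← hrdef, hnum, div_div]
    ring_nf
  -- derivative of κ/√(κ²+τ²)
  have hgd : HasDerivAt (fun u => κ u / Real.sqrt (κ u ^ 2 + τ u ^ 2))
      (-(τ s * (τ' s * κ s - κ' s * τ s)) / r ^ 3) s := by
    have hnum : κ' s * r - κ s * ((κ s * κ' s + τ s * τ' s) / r)
        = -(τ s * (τ' s * κ s - κ' s * τ s)) / r := by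
      field_simp
      linear_combination κ' s * hr2
    have h := (hκ' s hs).div hrd hrne
    convert h using 1
    · rfl
    · rfl
    · rfl
    rw [← hrdef, hnum, div_div]
    ring_nf
  -- derivative of the T-coefficient is cos θ * κ
  have ha : HasDerivAt (fun u => ε * (τ u / Real.sqrt (κ u ^ 2 + τ u ^ 2)) * Real.sin θ)
      (Real.cos θ * κ s) s := by
    have h := (hfd.const_mul ε).mul_const (Real.sin θ)
    convert h using 1
    · rfl
    · rfl
    field_simp
    linear_combination (-(ε * κ s)) * hkey + (-(Real.cos θ * κ s * r ^ 3)) * hε2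
  -- derivative of the B-coefficient is -(cos θ * τ)
  have hc : HasDerivAt (fun u => ε * (κ u / Real.sqrt (κ u ^ 2 + τ u ^ 2)) * Real.sin θ)
      (-(Real.cos θ * τ s)) s := by
    have h := (hgd.const_mul ε).mul_const (Real.sin θ)
    convert h using 1
    · rfl
    · rfl
    field_simp
    linear_combination (ε * τ s) * hkey + (Real.cos θ * τ s * r ^ 3) * hε2
  have hD := ((ha.smul (hT s hs)).add ((hN s hs).const_smul (Real.cos θ))).add
      (hc.smul (hB s hs))
  convert hD using 1
  · rfl
  · rfl
  · rfl
  · rfl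
  rw [← hrdef]
  module
end
end

section
/- Let α: I → ℝ³ be a unit speed curve with curvature κ > 0, torsion τ, κ²+τ² > 0, and let β = N be its principal normal indicatrix on S². If κ_β denotes the curvature of β and k_g its geodesic curvature on S² (with normal curvature k_n = 1 on the unit sphere, so k_g² + 1 = κ_β²), then k_g = ± (κ²/(κ²+τ²)^{3/2})(τ/κ)'. -/
noncomputable section

/-- The cross product on `ℝ³ = EuclideanSpace ℝ (Fin 3)`. -/
def cross3 (u v : EuclideanSpace ℝ (Fin 3)) : EuclideanSpace ℝ (Fin 3) :=
  WithLp.toLp 2 ![u 1 * v 2 - u 2 * v 1, u 2 * v 0 - u 0 * v 2, u 0 * v 1 - u 1 * v 0]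

private lemma normsq3 (x : EuclideanSpace ℝ (Fin 3)) :
    ‖x‖ ^ 2 = x 0 ^ 2 + x 1 ^ 2 + x 2 ^ 2 := by
  rw [EuclideanSpace.norm_eq, Real.sq_sqrt (by positivity)]
  simp [Fin.sum_univ_three, Real.norm_eq_abs, sq_abs]

/-- If `k_g` is the geodesic curvature of the principal normal
indicatrix `β = N` on the unit sphere, determined by `k_g² + 1 = κ_β²` where
`κ_β = ‖N' × N''‖/‖N'‖³`, then `k_g = ± (κ²/(κ²+τ²)^{3/2})(τ/κ)'`. -/
theorem normal_indicatrix_geodesic_curvature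
    (I : Set ℝ) (hI : IsOpen I)
    (T N B : ℝ → EuclideanSpace ℝ (Fin 3)) (κ τ κ' τ' k_g : ℝ → ℝ)
    (hκpos : ∀ s ∈ I, 0 < κ s)
    (hκτpos : ∀ s ∈ I, 0 < (κ s) ^ 2 + (τ s) ^ 2)
    (hTunit : ∀ s ∈ I, ‖T s‖ = 1) (hNunit : ∀ s ∈ I, ‖N s‖ = 1)
    (hTN : ∀ s ∈ I, (inner ℝ (T s) (N s) : ℝ) = 0)
    (hBdef : ∀ s ∈ I, B s = cross3 (T s) (N s))
    (hT : ∀ s ∈ I, HasDerivAt T (κ s • N s) s)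
    (hN : ∀ s ∈ I, HasDerivAt N (-(κ s) • T s + τ s • B s) s)
    (hB : ∀ s ∈ I, HasDerivAt B (-(τ s) • N s) s)
    (hκ' : ∀ s ∈ I, HasDerivAt κ (κ' s) s)
    (hτ' : ∀ s ∈ I, HasDerivAt τ (τ' s) s)
    (hkg : ∀ s ∈ I, (k_g s) ^ 2 + 1
      = (‖cross3 (-(κ s) • T s + τ s • B s)
            (-(κ' s) • T s - ((κ s) ^ 2 + (τ s) ^ 2) • N s + τ' s • B s)‖
          / ‖-(κ s) • T s + τ s • B s‖ ^ 3) ^ 2) :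
    ∀ s ∈ I,
      k_g s = ((κ s) ^ 2 / Real.sqrt (((κ s) ^ 2 + (τ s) ^ 2) ^ 3))
          * ((τ' s * κ s - κ' s * τ s) / (κ s) ^ 2)
      ∨ k_g s = -(((κ s) ^ 2 / Real.sqrt (((κ s) ^ 2 + (τ s) ^ 2) ^ 3))
          * ((τ' s * κ s - κ' s * τ s) / (κ s) ^ 2)) := by
  intro s hs
  have hQ : T s 0 ^ 2 + T s 1 ^ 2 + T s 2 ^ 2 = 1 := by
    have := normsq3 (T s); rw [hTunit s hs] at this; linarith
  have hR : N s 0 ^ 2 + N s 1 ^ 2 + N s 2 ^ 2 = 1 := by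
    have := normsq3 (N s); rw [hNunit s hs] at this; linarith
  have hS : T s 0 * N s 0 + T s 1 * N s 1 + T s 2 * N s 2 = 0 := by
    simpa [PiLp.inner_apply, RCLike.inner_apply, Fin.sum_univ_three, mul_comm] using hTN s hs
  have hb0 : B s 0 = T s 1 * N s 2 - T s 2 * N s 1 := by rw [hBdef s hs]; simp [cross3]
  have hb1 : B s 1 = T s 2 * N s 0 - T s 0 * N s 2 := by rw [hBdef s hs]; simp [cross3]
  have hb2 : B s 2 = T s 0 * N s 1 - T s 1 * N s 0 := by rw [hBdef s hs]; simp [cross3]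
  set a := κ s
  set o := τ s
  set a' := κ' s
  set o' := τ' s
  set P : ℝ := a ^ 2 + o ^ 2 with hP
  set D : ℝ := o' * a - a' * o with hD
  set v : EuclideanSpace ℝ (Fin 3) := -a • T s + o • B s with hv
  set w : EuclideanSpace ℝ (Fin 3) := -a' • T s - P • N s + o' • B s with hw
  have hv0 : v 0 = -a * T s 0 + o * B s 0 := by rw [hv]; simp
  have hv1 : v 1 = -a * T s 1 + o * B s 1 := by rw [hv]; simp
  have hv2 : v 2 = -a * T s 2 + o * B s 2 := by rw [hv]; simp
  have hw0 : w 0 = -a' * T s 0 - P * N s 0 + o' * B s 0 := by rw [hw]; simp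
  have hw1 : w 1 = -a' * T s 1 - P * N s 1 + o' * B s 1 := by rw [hw]; simp
  have hw2 : w 2 = -a' * T s 2 - P * N s 2 + o' * B s 2 := by rw [hw]; simp
  -- components of the cross product c = v × w
  have hc0 : (cross3 v w) 0
      = (o * P) * T s 0 + D * N s 0 + (a * P) * B s 0 := by
    show v 1 * w 2 - v 2 * w 1 = _
    rw [hv1, hv2, hw1, hw2, hb0, hb1, hb2]
    linear_combination (((a' * o - a * o') * T s 0 - o * P * N s 0) * hS
      + (o * P * T s 0) * hR + ((a * o' - a' * o) * N s 0) * hQ)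
  have hc1 : (cross3 v w) 1
      = (o * P) * T s 1 + D * N s 1 + (a * P) * B s 1 := by
    show v 2 * w 0 - v 0 * w 2 = _
    rw [hv0, hv2, hw0, hw2, hb0, hb1, hb2]
    linear_combination (((a' * o - a * o') * T s 1 - o * P * N s 1) * hS
      + (o * P * T s 1) * hR + ((a * o' - a' * o) * N s 1) * hQ)
  have hc2 : (cross3 v w) 2
      = (o * P) * T s 2 + D * N s 2 + (a * P) * B s 2 := by
    show v 0 * w 1 - v 1 * w 0 = _
    rw [hv0, hv1, hw0, hw1, hb0, hb1, hb2]
    linear_combination (((a' * o - a * o') * T s 2 - o * P * N s 2) * hS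
      + (o * P * T s 2) * hR + ((a * o' - a' * o) * N s 2) * hQ)
  have hPpos : 0 < P := hκτpos s hs
  have hvn : ‖v‖ ^ 2 = P := by
    rw [normsq3, hv0, hv1, hv2, hb0, hb1, hb2]
    linear_combination ((a ^ 2 + o ^ 2 * (N s 0 ^ 2 + N s 1 ^ 2 + N s 2 ^ 2)) * hQ
      + o ^ 2 * hR
      - (o ^ 2 * (T s 0 * N s 0 + T s 1 * N s 1 + T s 2 * N s 2)) * hS)
  have hcn : ‖cross3 v w‖ ^ 2 = P ^ 3 + D ^ 2 := by
    rw [normsq3, hc0, hc1, hc2, hb0, hb1, hb2]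
    linear_combination (((o * P) ^ 2 + (a * P) ^ 2 * (N s 0 ^ 2 + N s 1 ^ 2 + N s 2 ^ 2)) * hQ
      + (D ^ 2 + (a * P) ^ 2) * hR
      + (2 * (o * P) * D - (a * P) ^ 2 * (T s 0 * N s 0 + T s 1 * N s 1 + T s 2 * N s 2)) * hS)
  have hk2 : k_g s ^ 2 = D ^ 2 / P ^ 3 := by
    have h := hkg s hs
    have h2 : (‖cross3 v w‖ / ‖v‖ ^ 3) ^ 2 = (P ^ 3 + D ^ 2) / P ^ 3 := by
      rw [div_pow, show (‖v‖ ^ 3) ^ 2 = (‖v‖ ^ 2) ^ 3 by ring, hvn, hcn]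
    rw [← hv] at h
    rw [h2] at h
    have hP3 : (0:ℝ) < P ^ 3 := by positivity
    field_simp at h ⊢
    linarith
  have hsq : Real.sqrt (P ^ 3) ^ 2 = P ^ 3 := Real.sq_sqrt (by positivity)
  have hsqpos : 0 < Real.sqrt (P ^ 3) := Real.sqrt_pos.mpr (by positivity)
  have hane : a ≠ 0 := ne_of_gt (hκpos s hs)
  set X : ℝ := (a ^ 2 / Real.sqrt (P ^ 3)) * (D / a ^ 2) with hX
  have hXval : X = D / Real.sqrt (P ^ 3) := by
    rw [hX]; field_simp
  have hX2 : X ^ 2 = D ^ 2 / P ^ 3 := by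
    rw [hXval, div_pow, hsq]
  have hfac : (k_g s - X) * (k_g s + X) = 0 := by
    linear_combination hk2 - hX2
  rcases mul_eq_zero.mp hfac with h | h
  · left; linarith
  · right; linarith
end
end

section
/- A unit speed curve α: I → ℝ³ with curvature κ > 0 and torsion τ is a slant helix (its principal normal makes a constant angle with some fixed unit vector) if and only if the function σ(s) = (κ²/(κ²+τ²)^{3/2})·(τ/κ)'(s) is constant on I. -/
noncomputable section

lemma inner3 (u v : EuclideanSpace ℝ (Fin 3)) :
    (inner ℝ u v : ℝ) = u 0 * v 0 + u 1 * v 1 + u 2 * v 2 := by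
  simp [PiLp.inner_apply, Fin.sum_univ_three, mul_comm]

lemma inner_cross_left (u v : EuclideanSpace ℝ (Fin 3)) :
    (inner ℝ u (cross3 u v) : ℝ) = 0 := by
  rw [inner3]; show u 0 * (u 1 * v 2 - u 2 * v 1) + u 1 * (u 2 * v 0 - u 0 * v 2)
    + u 2 * (u 0 * v 1 - u 1 * v 0) = 0; ring

lemma inner_cross_right (u v : EuclideanSpace ℝ (Fin 3)) :
    (inner ℝ v (cross3 u v) : ℝ) = 0 := by
  rw [inner3]; show v 0 * (u 1 * v 2 - u 2 * v 1) + v 1 * (u 2 * v 0 - u 0 * v 2)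
    + v 2 * (u 0 * v 1 - u 1 * v 0) = 0; ring

lemma inner_cross_self (u v : EuclideanSpace ℝ (Fin 3)) :
    (inner ℝ (cross3 u v) (cross3 u v) : ℝ)
      = (inner ℝ u u : ℝ) * (inner ℝ v v : ℝ) - (inner ℝ u v : ℝ) ^ 2 := by
  rw [inner3, inner3, inner3, inner3]
  show (u 1 * v 2 - u 2 * v 1) * (u 1 * v 2 - u 2 * v 1)
    + (u 2 * v 0 - u 0 * v 2) * (u 2 * v 0 - u 0 * v 2)
    + (u 0 * v 1 - u 1 * v 0) * (u 0 * v 1 - u 1 * v 0) = _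
  ring

lemma norm_one_inner (u : EuclideanSpace ℝ (Fin 3)) (h : ‖u‖ = 1) :
    (inner ℝ u u : ℝ) = 1 := by
  rw [real_inner_self_eq_norm_sq, h, one_pow]

/-- completeness of an orthonormal triple in ℝ³ -/
lemma complete3 (T N B d : EuclideanSpace ℝ (Fin 3))
    (hT : ‖T‖ = 1) (hN : ‖N‖ = 1) (hTN : (inner ℝ T N : ℝ) = 0)
    (hB : B = cross3 T N) :
    (inner ℝ T d : ℝ) ^ 2 + (inner ℝ N d : ℝ) ^ 2 + (inner ℝ B d : ℝ) ^ 2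
      = (inner ℝ d d : ℝ) ∧
    d = (inner ℝ T d : ℝ) • T + (inner ℝ N d : ℝ) • N + (inner ℝ B d : ℝ) • B := by
  have hTT := norm_one_inner T hT
  have hNN := norm_one_inner N hN
  have hTB : (inner ℝ T B : ℝ) = 0 := by rw [hB]; exact inner_cross_left T N
  have hNB : (inner ℝ N B : ℝ) = 0 := by rw [hB]; exact inner_cross_right T N
  have hBB : (inner ℝ B B : ℝ) = 1 := by
    rw [hB, inner_cross_self, hTT, hNN, hTN]; ring
  rw [inner3] at hTT hNN hTN hTB hNB hBB
  have h1 : (Matrix.of ![(fun i => T i), (fun i => N i), (fun i => B i)]) *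
      (Matrix.of ![(fun i => T i), (fun i => N i), (fun i => B i)]).transpose = 1 := by
    ext i j
    simp only [Matrix.mul_apply, Matrix.transpose_apply, Fin.sum_univ_three]
    fin_cases i <;> fin_cases j <;>
      simp [Matrix.one_apply] <;>
      linarith [hTT, hNN, hTN, hTB, hNB, hBB]
  have h2 := mul_eq_one_comm.mp h1
  have key : ∀ i j : Fin 3, T i * T j + N i * N j + B i * B j
      = if i = j then 1 else 0 := by
    intro i j
    have := congrFun (congrFun h2 i) j
    simpa [Matrix.mul_apply, Fin.sum_univ_three, Matrix.transpose_apply,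
      Matrix.one_apply] using this
  constructor
  · rw [inner3, inner3, inner3, inner3]
    have e00 := key 0 0; have e11 := key 1 1; have e22 := key 2 2
    have e01 := key 0 1; have e02 := key 0 2; have e12 := key 1 2
    rw [if_pos rfl] at e00 e11 e22
    rw [if_neg (by decide)] at e01; rw [if_neg (by decide)] at e02
    rw [if_neg (by decide)] at e12
    linear_combination (d 0)^2 * e00 + (d 1)^2 * e11 + (d 2)^2 * e22
      + 2*(d 0)*(d 1)*e01 + 2*(d 0)*(d 2)*e02 + 2*(d 1)*(d 2)*e12
  · apply PiLp.ext
    intro i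
    rw [inner3, inner3, inner3]
    simp only [PiLp.add_apply, PiLp.smul_apply, smul_eq_mul]
    have e0 := key i 0; have e1 := key i 1; have e2 := key i 2
    have hid : (if i = 0 then (1:ℝ) else 0) * d 0 + (if i = 1 then (1:ℝ) else 0) * d 1
        + (if i = 2 then (1:ℝ) else 0) * d 2 = d i := by
      fin_cases i <;> simp
    linear_combination -(d 0 * e0) - d 1 * e1 - d 2 * e2 - hid

lemma inner_comb (T N B : EuclideanSpace ℝ (Fin 3)) (p1 p2 p3 q1 q2 q3 : ℝ) :
    (inner ℝ (p1 • T + p2 • N + p3 • B) (q1 • T + q2 • N + q3 • B) : ℝ)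
      = p1 * q1 * (inner ℝ T T : ℝ) + p1 * q2 * (inner ℝ T N : ℝ)
        + p1 * q3 * (inner ℝ T B : ℝ) + p2 * q1 * (inner ℝ N T : ℝ)
        + p2 * q2 * (inner ℝ N N : ℝ) + p2 * q3 * (inner ℝ N B : ℝ)
        + p3 * q1 * (inner ℝ B T : ℝ) + p3 * q2 * (inner ℝ B N : ℝ)
        + p3 * q3 * (inner ℝ B B : ℝ) := by
  rw [inner_add_left, inner_add_left, inner_add_right, inner_add_right,
    inner_add_right, inner_add_right, inner_add_right, inner_add_right,
    real_inner_smul_left, real_inner_smul_left, real_inner_smul_left,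
    real_inner_smul_left, real_inner_smul_left, real_inner_smul_left,
    real_inner_smul_left, real_inner_smul_left, real_inner_smul_left,
    real_inner_smul_right, real_inner_smul_right, real_inner_smul_right,
    real_inner_smul_right, real_inner_smul_right, real_inner_smul_right,
    real_inner_smul_right, real_inner_smul_right, real_inner_smul_right]
  ring

set_option maxHeartbeats 2000000 in
/-- Izumiya–Takeuchi: A unit speed curve with `κ > 0` is a slant
helix (its principal normal makes a constant angle with a fixed unit vector)
if and only if `σ = (κ²/(κ²+τ²)^{3/2})(τ/κ)'` is constant. -/
theorem slant_helix_characterization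
    (I : Set ℝ) (hI : IsOpen I) (hconv : Convex ℝ I) (hne : I.Nonempty)
    (α T N B : ℝ → EuclideanSpace ℝ (Fin 3)) (κ τ κ' τ' : ℝ → ℝ)
    (hα : ∀ s ∈ I, HasDerivAt α (T s) s)
    (hκpos : ∀ s ∈ I, 0 < κ s)
    (hκτpos : ∀ s ∈ I, 0 < (κ s) ^ 2 + (τ s) ^ 2)
    (hTunit : ∀ s ∈ I, ‖T s‖ = 1) (hNunit : ∀ s ∈ I, ‖N s‖ = 1)
    (hTN : ∀ s ∈ I, (inner ℝ (T s) (N s) : ℝ) = 0)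
    (hBdef : ∀ s ∈ I, B s = cross3 (T s) (N s))
    (hT : ∀ s ∈ I, HasDerivAt T (κ s • N s) s)
    (hN : ∀ s ∈ I, HasDerivAt N (-(κ s) • T s + τ s • B s) s)
    (hB : ∀ s ∈ I, HasDerivAt B (-(τ s) • N s) s)
    (hκ' : ∀ s ∈ I, HasDerivAt κ (κ' s) s)
    (hτ' : ∀ s ∈ I, HasDerivAt τ (τ' s) s)
    (hκ'c : ContinuousOn κ' I) (hτ'c : ContinuousOn τ' I) :
    (∃ d : EuclideanSpace ℝ (Fin 3), ‖d‖ = 1 ∧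
        ∃ θ : ℝ, ∀ s ∈ I, (inner ℝ (N s) d : ℝ) = Real.cos θ)
    ↔ (∃ c : ℝ, ∀ s ∈ I,
        ((κ s) ^ 2 / Real.sqrt (((κ s) ^ 2 + (τ s) ^ 2) ^ 3))
          * ((τ' s * κ s - κ' s * τ s) / (κ s) ^ 2) = c) := by
  obtain ⟨s₀, hs₀⟩ := hne
  set W : ℝ → ℝ := fun s => Real.sqrt (κ s ^ 2 + τ s ^ 2) with hWdef
  have hWpos : ∀ s ∈ I, 0 < W s := fun s hs => Real.sqrt_pos.mpr (hκτpos s hs)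
  have hW2 : ∀ s ∈ I, W s ^ 2 = κ s ^ 2 + τ s ^ 2 :=
    fun s hs => Real.sq_sqrt (hκτpos s hs).le
  -- the σ expression rewrite
  have hE : ∀ s ∈ I, ((κ s) ^ 2 / Real.sqrt (((κ s) ^ 2 + (τ s) ^ 2) ^ 3))
      * ((τ' s * κ s - κ' s * τ s) / (κ s) ^ 2)
      = (τ' s * κ s - κ' s * τ s) / W s ^ 3 := by
    intro s hs
    have h1 : Real.sqrt ((κ s ^ 2 + τ s ^ 2) ^ 3) = W s ^ 3 := by
      rw [show (κ s ^ 2 + τ s ^ 2) ^ 3 = (κ s ^ 2 + τ s ^ 2) ^ 2 * (κ s ^ 2 + τ s ^ 2) by ring,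
        Real.sqrt_mul (by positivity), Real.sqrt_sq (hκτpos s hs).le,
        show W s ^ 3 = W s ^ 2 * W s by ring, hW2 s hs]
    rw [h1]
    have hκ0 := (hκpos s hs).ne'
    have hW0 := (hWpos s hs).ne'
    field_simp
  -- derivative of W
  have hWd : ∀ s ∈ I, HasDerivAt W ((κ s * κ' s + τ s * τ' s) / W s) s := by
    intro s hs
    have h := (((hκ' s hs).pow 2).add ((hτ' s hs).pow 2)).sqrt (hκτpos s hs).ne'
    refine h.congr_deriv ?_
    symm
    have hW0 := (hWpos s hs).ne'
    rw [hWdef]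
    simp only [Pi.add_apply, Pi.pow_apply]
    field_simp
    ring
  -- derivative of τ/W
  have hud : ∀ s ∈ I, HasDerivAt (fun t => τ t / W t)
      (κ s * ((τ' s * κ s - κ' s * τ s) / W s ^ 3)) s := by
    intro s hs
    have h := (hτ' s hs).div (hWd s hs) (hWpos s hs).ne'
    refine h.congr_deriv ?_
    symm
    have hW0 := (hWpos s hs).ne'
    have h2 := hW2 s hs
    field_simp
    linear_combination (-(τ' s)) * h2
  -- derivative of κ/W
  have hwd : ∀ s ∈ I, HasDerivAt (fun t => κ t / W t)
      (-(τ s) * ((τ' s * κ s - κ' s * τ s) / W s ^ 3)) s := by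
    intro s hs
    have h := (hκ' s hs).div (hWd s hs) (hWpos s hs).ne'
    refine h.congr_deriv ?_
    symm
    have hW0 := (hWpos s hs).ne'
    have h2 := hW2 s hs
    field_simp
    linear_combination (-(κ' s)) * h2
  constructor
  · -- slant helix → σ constant
    rintro ⟨d, hd1, θ, hθ⟩
    have hadd := fun (s : ℝ) (hs : s ∈ I) =>
      (complete3 (T s) (N s) (B s) d (hTunit s hs) (hNunit s hs) (hTN s hs) (hBdef s hs)).1
    set co := Real.cos θ with hco
    set a : ℝ → ℝ := fun s => (inner ℝ (T s) d : ℝ) with ha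
    set b : ℝ → ℝ := fun s => (inner ℝ (B s) d : ℝ) with hb
    have hcomp : ∀ s ∈ I, a s ^ 2 + co ^ 2 + b s ^ 2 = 1 := by
      intro s hs
      have h := hadd s hs
      rw [hθ s hs, real_inner_self_eq_norm_sq, hd1, one_pow] at h
      exact h
    have had : ∀ s ∈ I, HasDerivAt a (κ s * co) s := by
      intro s hs
      have h := (hT s hs).inner ℝ (hasDerivAt_const s d)
      have hv : (inner ℝ (T s) (0 : EuclideanSpace ℝ (Fin 3)) : ℝ)
          + (inner ℝ (κ s • N s) d : ℝ) = κ s * co := by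
        rw [inner_zero_right, real_inner_smul_left, hθ s hs]; ring
      exact hv ▸ h
    have hbd : ∀ s ∈ I, HasDerivAt b (-(τ s) * co) s := by
      intro s hs
      have h := (hB s hs).inner ℝ (hasDerivAt_const s d)
      have hv : (inner ℝ (B s) (0 : EuclideanSpace ℝ (Fin 3)) : ℝ)
          + (inner ℝ (-(τ s) • N s) d : ℝ) = -(τ s) * co := by
        rw [inner_zero_right, real_inner_smul_left, hθ s hs]; ring
      exact hv ▸ h
    have hrel : ∀ s ∈ I, τ s * b s = κ s * a s := by
      intro s hs
      have h := (hN s hs).inner ℝ (hasDerivAt_const s d)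
      have h0 : HasDerivAt (fun t => (inner ℝ (N t) d : ℝ)) 0 s :=
        (hasDerivAt_const s co).congr_of_eventuallyEq
          (Filter.eventually_of_mem (hI.mem_nhds hs) (fun t ht => hθ t ht))
      have hu := h0.unique h
      rw [inner_zero_right, inner_add_left, real_inner_smul_left,
        real_inner_smul_left] at hu
      show τ s * (inner ℝ (B s) d : ℝ) = κ s * (inner ℝ (T s) d : ℝ)
      linarith
    have hco2 : co ^ 2 ≤ 1 := by
      nlinarith [Real.cos_le_one θ, Real.neg_one_le_cos θ]
    set r := Real.sqrt (1 - co ^ 2) with hrdef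
    have hr2 : r ^ 2 = 1 - co ^ 2 := Real.sq_sqrt (by linarith)
    by_cases hr : r = 0
    · exfalso
      have hco0 : co ≠ 0 := by
        intro h
        rw [hrdef, h] at hr
        norm_num at hr
      have ha0 : ∀ s ∈ I, a s = 0 := by
        intro s hs
        have h := hcomp s hs
        have : r ^ 2 = 0 := by rw [hr]; ring
        rw [hr2] at this
        nlinarith [sq_nonneg (a s), sq_nonneg (b s)]
      have h0 : HasDerivAt a 0 s₀ :=
        (hasDerivAt_const s₀ (0:ℝ)).congr_of_eventuallyEq
          (Filter.eventually_of_mem (hI.mem_nhds hs₀) (fun t ht => ha0 t ht))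
      have hu := h0.unique (had s₀ hs₀)
      have := (hκpos s₀ hs₀).ne'
      exact hco0 (by
        rcases mul_eq_zero.mp hu.symm with h | h
        · exact absurd h this
        · exact h)
    have hrpos : 0 < r := lt_of_le_of_ne (Real.sqrt_nonneg _) (Ne.symm hr)
    set g : ℝ → ℝ := fun s => a s * τ s + b s * κ s with hgdef
    have hg2 : ∀ s ∈ I, g s ^ 2 = r ^ 2 * (κ s ^ 2 + τ s ^ 2) := by
      intro s hs
      have h1 := hcomp s hs
      have h2 := hrel s hs
      have hab : a s ^ 2 + b s ^ 2 = r ^ 2 := by rw [hr2]; linarith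
      rw [hgdef]
      linear_combination (κ s ^ 2 + τ s ^ 2) * hab + (κ s * a s - τ s * b s) * h2
    -- continuity
    have haC : ContinuousOn a I := fun s hs => (had s hs).continuousAt.continuousWithinAt
    have hbC : ContinuousOn b I := fun s hs => (hbd s hs).continuousAt.continuousWithinAt
    have hκC : ContinuousOn κ I := fun s hs => (hκ' s hs).continuousAt.continuousWithinAt
    have hτC : ContinuousOn τ I := fun s hs => (hτ' s hs).continuousAt.continuousWithinAt
    have hWC : ContinuousOn W I :=
      Real.continuous_sqrt.comp_continuousOn ((hκC.pow 2).add (hτC.pow 2))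
    have hgC : ContinuousOn g I := (haC.mul hτC).add (hbC.mul hκC)
    set ε : ℝ → ℝ := fun s => g s / (r * W s) with hεdef
    have hεC : ContinuousOn ε I :=
      hgC.div (continuousOn_const.mul hWC)
        (fun s hs => (mul_pos hrpos (hWpos s hs)).ne')
    have hε2 : ∀ s ∈ I, ε s ^ 2 = 1 := by
      intro s hs
      have h := hg2 s hs
      show (g s / (r * W s)) ^ 2 = 1
      rw [div_pow, h, mul_pow, hW2 s hs,
        div_self (mul_pos (pow_pos hrpos 2) (hκτpos s hs)).ne']
    have hεval : ∀ s ∈ I, ε s = 1 ∨ ε s = -1 := by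
      intro s hs
      have h : (ε s - 1) * (ε s + 1) = 0 := by nlinarith [hε2 s hs]
      rcases mul_eq_zero.mp h with h | h
      · left; linarith
      · right; linarith
    have hεconst : ∀ s ∈ I, ε s = ε s₀ := by
      intro s hs
      by_contra hne'
      have hzero : ∃ u ∈ I, ε u = 0 := by
        rcases hεval s hs with h1 | h1 <;> rcases hεval s₀ hs₀ with h2 | h2
        · exact absurd (h1.trans h2.symm) hne'
        · obtain ⟨u, hu, hu0⟩ := hconv.isPreconnected.intermediate_value hs₀ hs hεC
            (show (0:ℝ) ∈ Set.Icc (ε s₀) (ε s) by rw [h1, h2]; norm_num)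
          exact ⟨u, hu, hu0⟩
        · obtain ⟨u, hu, hu0⟩ := hconv.isPreconnected.intermediate_value hs hs₀ hεC
            (show (0:ℝ) ∈ Set.Icc (ε s) (ε s₀) by rw [h1, h2]; norm_num)
          exact ⟨u, hu, hu0⟩
        · exact absurd (h1.trans h2.symm) hne'
      obtain ⟨u, hu, hu0⟩ := hzero
      have := hε2 u hu
      rw [hu0] at this
      norm_num at this
    set c0 := ε s₀ * r with hc0def
    have hc00 : c0 ≠ 0 := by
      have hε0 : ε s₀ ≠ 0 := by
        rcases hεval s₀ hs₀ with h | h <;> rw [h] <;> norm_num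
      exact mul_ne_zero hε0 hrpos.ne'
    have hgval : ∀ s ∈ I, g s = ε s₀ * (r * W s) := by
      intro s hs
      rw [← hεconst s hs]
      show g s = g s / (r * W s) * (r * W s)
      rw [div_mul_cancel₀ _ (mul_pos hrpos (hWpos s hs)).ne']
    have haW : ∀ s ∈ I, a s * W s = τ s * c0 := by
      intro s hs
      have h1 : a s * W s ^ 2 = τ s * g s := by
        have h2 := hrel s hs
        show a s * W s ^ 2 = τ s * (a s * τ s + b s * κ s)
        linear_combination a s * (hW2 s hs) - κ s * h2
      have h2 := hgval s hs
      have hW0 := (hWpos s hs).ne'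
      have h3 : (a s * W s) * W s = (τ s * c0) * W s := by
        rw [hc0def]
        linear_combination h1 + τ s * h2
      exact mul_right_cancel₀ hW0 h3
    have hfrac : ∀ s ∈ I, τ s / W s = a s / c0 := by
      intro s hs
      have h := haW s hs
      have hW0 := (hWpos s hs).ne'
      field_simp
      linarith [h]
    refine ⟨co / c0, fun s hs => ?_⟩
    rw [hE s hs]
    have h1 := hud s hs
    have h2 : HasDerivAt (fun t => a t / c0) (κ s * co / c0) s := (had s hs).div_const c0
    have h3 : HasDerivAt (fun t => τ t / W t) (κ s * co / c0) s :=
      h2.congr_of_eventuallyEq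
        (Filter.eventually_of_mem (hI.mem_nhds hs) (fun t ht => hfrac t ht))
    have hu := h3.unique h1
    rw [mul_div_assoc] at hu
    exact (mul_left_cancel₀ (hκpos s hs).ne' hu).symm
  · -- σ constant → slant helix
    rintro ⟨c, hc⟩
    have hσ : ∀ s ∈ I, (τ' s * κ s - κ' s * τ s) / W s ^ 3 = c := by
      intro s hs
      rw [← hE s hs]
      exact hc s hs
    set q := Real.sqrt (1 + c ^ 2) with hqdef
    have hqpos : 0 < q := Real.sqrt_pos.mpr (by positivity)
    have hq2 : q ^ 2 = 1 + c ^ 2 := Real.sq_sqrt (by positivity)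
    set D : ℝ → EuclideanSpace ℝ (Fin 3) :=
      fun s => q⁻¹ • ((τ s / W s) • T s + c • N s + (κ s / W s) • B s) with hDdef
    have hDd : ∀ s ∈ I, HasDerivAt D 0 s := by
      intro s hs
      have h1 : HasDerivAt (fun t => (τ t / W t) • T t)
          ((τ s / W s) • (κ s • N s) + (κ s * ((τ' s * κ s - κ' s * τ s) / W s ^ 3)) • T s) s :=
        (hud s hs).smul (hT s hs)
      have h2 : HasDerivAt (fun t => c • N t) (c • (-(κ s) • T s + τ s • B s)) s :=
        (hN s hs).const_smul c
      have h3 : HasDerivAt (fun t => (κ t / W t) • B t)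
          ((κ s / W s) • (-(τ s) • N s) + (-(τ s) * ((τ' s * κ s - κ' s * τ s) / W s ^ 3)) • B s) s :=
        (hwd s hs).smul (hB s hs)
      have h := ((h1.add h2).add h3).const_smul (q⁻¹ : ℝ)
      have hz : ((τ s / W s) • (κ s • N s)
            + (κ s * ((τ' s * κ s - κ' s * τ s) / W s ^ 3)) • T s
            + c • (-(κ s) • T s + τ s • B s)
            + ((κ s / W s) • (-(τ s) • N s)
            + (-(τ s) * ((τ' s * κ s - κ' s * τ s) / W s ^ 3)) • B s))
          = (0 : EuclideanSpace ℝ (Fin 3)) := by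
        rw [hσ s hs]
        module
      rw [hDdef]
      refine h.congr_deriv ?_
      rw [hz, smul_zero]
    -- D is constant on I
    have hF : ∀ t ∈ I, HasFDerivWithinAt D
        (0 : ℝ →L[ℝ] EuclideanSpace ℝ (Fin 3)) I t := by
      intro t ht
      have h := (hDd t ht).hasFDerivAt
      have h0 : (ContinuousLinearMap.toSpanSingleton ℝ
          (0 : EuclideanSpace ℝ (Fin 3))) = 0 := by
        ext x; simp
      rw [h0] at h
      exact h.hasFDerivWithinAt
    have hDconst : ∀ s ∈ I, D s = D s₀ := by
      intro s hs
      have h := hconv.norm_image_sub_le_of_norm_hasFDerivWithin_le (C := 0) hF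
        (fun x _ => by rw [norm_zero]) hs₀ hs
      rw [zero_mul] at h
      exact sub_eq_zero.mp (norm_le_zero_iff.mp h)
    -- Gram facts
    have gNT : ∀ s ∈ I, (inner ℝ (N s) (T s) : ℝ) = 0 := fun s hs => by
      rw [real_inner_comm]; exact hTN s hs
    have gNN : ∀ s ∈ I, (inner ℝ (N s) (N s) : ℝ) = 1 :=
      fun s hs => norm_one_inner _ (hNunit s hs)
    have gNB : ∀ s ∈ I, (inner ℝ (N s) (B s) : ℝ) = 0 := fun s hs => by
      rw [hBdef s hs]; exact inner_cross_right _ _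
    have gTT : ∀ s ∈ I, (inner ℝ (T s) (T s) : ℝ) = 1 :=
      fun s hs => norm_one_inner _ (hTunit s hs)
    have gTB : ∀ s ∈ I, (inner ℝ (T s) (B s) : ℝ) = 0 := fun s hs => by
      rw [hBdef s hs]; exact inner_cross_left _ _
    have gBT : ∀ s ∈ I, (inner ℝ (B s) (T s) : ℝ) = 0 := fun s hs => by
      rw [real_inner_comm]; exact gTB s hs
    have gBN : ∀ s ∈ I, (inner ℝ (B s) (N s) : ℝ) = 0 := fun s hs => by
      rw [real_inner_comm]; exact gNB s hs
    have gBB : ∀ s ∈ I, (inner ℝ (B s) (B s) : ℝ) = 1 := fun s hs => by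
      rw [hBdef s hs, inner_cross_self, gTT s hs, gNN s hs, hTN s hs]; ring
    -- inner products with D
    have hND : ∀ s ∈ I, (inner ℝ (N s) (D s) : ℝ) = c / q := by
      intro s hs
      show (inner ℝ (N s)
        (q⁻¹ • ((τ s / W s) • T s + c • N s + (κ s / W s) • B s)) : ℝ) = c / q
      rw [real_inner_smul_right, inner_add_right, inner_add_right,
        real_inner_smul_right, real_inner_smul_right, real_inner_smul_right,
        gNT s hs, gNN s hs, gNB s hs]
      field_simp
      simp
    have hDnorm : ‖D s₀‖ = 1 := by
      have h : (inner ℝ (D s₀) (D s₀) : ℝ) = 1 := by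
        show (inner ℝ (q⁻¹ • ((τ s₀ / W s₀) • T s₀ + c • N s₀ + (κ s₀ / W s₀) • B s₀))
          (q⁻¹ • ((τ s₀ / W s₀) • T s₀ + c • N s₀ + (κ s₀ / W s₀) • B s₀)) : ℝ) = 1
        rw [real_inner_smul_left, real_inner_smul_right, inner_comb,
          gTT s₀ hs₀, gTB s₀ hs₀, gNT s₀ hs₀, gNN s₀ hs₀, gNB s₀ hs₀,
          gBT s₀ hs₀, gBN s₀ hs₀, gBB s₀ hs₀, hTN s₀ hs₀]
        have hW0 := (hWpos s₀ hs₀).ne'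
        have hq0 := hqpos.ne'
        field_simp
        linear_combination (-1 : ℝ) * hW2 s₀ hs₀ - (W s₀ ^ 2) * hq2
      have h2 : ‖D s₀‖ ^ 2 = 1 := by rw [← real_inner_self_eq_norm_sq, h]
      nlinarith [norm_nonneg (D s₀)]
    have hcq1 : c / q ≤ 1 := by
      rw [div_le_one hqpos]
      nlinarith [hq2, hqpos]
    have hcq2 : -1 ≤ c / q := by
      rw [le_div_iff₀ hqpos]
      nlinarith [hq2, hqpos]
    refine ⟨D s₀, hDnorm, Real.arccos (c / q), fun s hs => ?_⟩
    rw [Real.cos_arccos hcq2 hcq1, ← hDconst s hs]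
    exact hND s hs
end
end

section
/- Let α: I → ℝ³ be a unit speed curve with κ > 0, τ, and Frenet frame (T, N, B), and suppose there exist a unit vector d and constant θ ∈ (0, π) with ⟨N, d⟩ = cos θ. If additionally ⟨B, d⟩ is nowhere zero, then (τ'κ - κ'τ)/(κ²+τ²)^{3/2} = ∓ cot θ, a constant; in particular the function (τ'κ - κ'τ)/(κ²+τ²)^{3/2} is constant. -/
noncomputable section

/-- For a unit speed slant helix with `⟨N, d⟩ = cos θ`, `θ ∈ (0, π)`
and `⟨B, d⟩` nowhere zero, the function `(τ'κ - κ'τ)/(κ²+τ²)^{3/2}` equals the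
constant `∓ cot θ`. -/
theorem slant_helix_sigma_constant
    (I : Set ℝ) (hI : IsOpen I)
    (T N B : ℝ → EuclideanSpace ℝ (Fin 3)) (κ τ κ' τ' : ℝ → ℝ)
    (hκpos : ∀ s ∈ I, 0 < κ s)
    (hTunit : ∀ s ∈ I, ‖T s‖ = 1) (hNunit : ∀ s ∈ I, ‖N s‖ = 1)
    (hBunit : ∀ s ∈ I, ‖B s‖ = 1)
    (hTN : ∀ s ∈ I, (inner ℝ (T s) (N s) : ℝ) = 0)
    (hTB : ∀ s ∈ I, (inner ℝ (T s) (B s) : ℝ) = 0)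
    (hNB : ∀ s ∈ I, (inner ℝ (N s) (B s) : ℝ) = 0)
    (hspan : ∀ s ∈ I, ∀ v : EuclideanSpace ℝ (Fin 3),
      v = (inner ℝ (T s) v : ℝ) • T s + (inner ℝ (N s) v : ℝ) • N s
        + (inner ℝ (B s) v : ℝ) • B s)
    (hT : ∀ s ∈ I, HasDerivAt T (κ s • N s) s)
    (hN : ∀ s ∈ I, HasDerivAt N (-(κ s) • T s + τ s • B s) s)
    (hB : ∀ s ∈ I, HasDerivAt B (-(τ s) • N s) s)
    (hκ' : ∀ s ∈ I, HasDerivAt κ (κ' s) s)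
    (hτ' : ∀ s ∈ I, HasDerivAt τ (τ' s) s)
    (d : EuclideanSpace ℝ (Fin 3)) (hd : ‖d‖ = 1)
    (θ : ℝ) (hθ0 : 0 < θ) (hθπ : θ < Real.pi)
    (hangle : ∀ s ∈ I, (inner ℝ (N s) d : ℝ) = Real.cos θ)
    (hBd : ∀ s ∈ I, (inner ℝ (B s) d : ℝ) ≠ 0)
    (hconv : Convex ℝ I) :
    ∃ ε : ℝ, (ε = 1 ∨ ε = -1) ∧ ∀ s ∈ I,
      (τ' s * κ s - κ' s * τ s) / Real.sqrt (((κ s) ^ 2 + (τ s) ^ 2) ^ 3)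
        = ε * (Real.cos θ / Real.sin θ) := by

  classical
  have hsinpos : 0 < Real.sin θ := Real.sin_pos_of_pos_of_lt_pi hθ0 hθπ
  set a : ℝ → ℝ := fun u => (inner ℝ (T u) d : ℝ) with ha_def
  set c : ℝ → ℝ := fun u => (inner ℝ (B u) d : ℝ) with hc_def
  -- derivative of a
  have hA : ∀ s ∈ I, HasDerivAt a (κ s * Real.cos θ) s := by
    intro s hs
    have h := HasDerivAt.inner ℝ (hT s hs) (hasDerivAt_const s d)
    have : (inner ℝ (T s) (0 : EuclideanSpace ℝ (Fin 3)) : ℝ)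
        + (inner ℝ (κ s • N s) d : ℝ) = κ s * Real.cos θ := by
      rw [inner_zero_right, real_inner_smul_left, hangle s hs]; ring
    rw [this] at h
    exact h
  -- derivative of c
  have hC : ∀ s ∈ I, HasDerivAt c (-(τ s) * Real.cos θ) s := by
    intro s hs
    have h := HasDerivAt.inner ℝ (hB s hs) (hasDerivAt_const s d)
    have : (inner ℝ (B s) (0 : EuclideanSpace ℝ (Fin 3)) : ℝ)
        + (inner ℝ ((-(τ s)) • N s) d : ℝ) = -(τ s) * Real.cos θ := by
      rw [inner_zero_right, real_inner_smul_left, hangle s hs]; ring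
    rw [this] at h
    exact h
  -- derivative of ⟨N, d⟩
  have hbal : ∀ s ∈ I, τ s * c s = κ s * a s := by
    intro s hs
    have h := HasDerivAt.inner ℝ (hN s hs) (hasDerivAt_const s d)
    have h2 : (inner ℝ (N s) (0 : EuclideanSpace ℝ (Fin 3)) : ℝ)
        + (inner ℝ ((-(κ s)) • T s + τ s • B s) d : ℝ)
        = -(κ s) * a s + τ s * c s := by
      rw [inner_zero_right, inner_add_left, real_inner_smul_left, real_inner_smul_left]
      ring
    rw [h2] at h
    have h0 : HasDerivAt (fun u => (inner ℝ (N u) d : ℝ)) 0 s := by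
      have heq : (fun u => (inner ℝ (N u) d : ℝ)) =ᶠ[nhds s] fun _ => Real.cos θ := by
        filter_upwards [hI.mem_nhds hs] with u hu using hangle u hu
      exact (hasDerivAt_const s (Real.cos θ)).congr_of_eventuallyEq heq
    have := h.unique h0
    linarith
  -- Pythagoras
  have hsum : ∀ s ∈ I, a s ^ 2 + c s ^ 2 = Real.sin θ ^ 2 := by
    intro s hs
    have hdd : (inner ℝ d d : ℝ) = 1 := by
      rw [real_inner_self_eq_norm_sq, hd]; norm_num
    have h := hspan s hs d
    have h2 : (inner ℝ d d : ℝ) = a s ^ 2 + Real.cos θ ^ 2 + c s ^ 2 := by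
      simp only [ha_def, hc_def]
      nth_rewrite 1 [h]
      rw [inner_add_left, inner_add_left, real_inner_smul_left, real_inner_smul_left,
        real_inner_smul_left, hangle s hs]
      ring
    have hsc := Real.sin_sq_add_cos_sq θ
    rw [hdd] at h2
    nlinarith [h2, hsc]
  -- differentiate τ c = κ a
  have hderiv_eq : ∀ s ∈ I,
      τ' s * c s + τ s * (-(τ s) * Real.cos θ)
        = κ' s * a s + κ s * (κ s * Real.cos θ) := by
    intro s hs
    have h1 : HasDerivAt (fun u => τ u * c u)
        (τ' s * c s + τ s * (-(τ s) * Real.cos θ)) s := (hτ' s hs).mul (hC s hs)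
    have h2 : HasDerivAt (fun u => κ u * a u)
        (κ' s * a s + κ s * (κ s * Real.cos θ)) s := (hκ' s hs).mul (hA s hs)
    have heq : (fun u => τ u * c u) =ᶠ[nhds s] fun u => κ u * a u := by
      filter_upwards [hI.mem_nhds hs] with u hu using hbal u hu
    have h1' : HasDerivAt (fun u => κ u * a u)
        (τ' s * c s + τ s * (-(τ s) * Real.cos θ)) s :=
      h1.congr_of_eventuallyEq heq.symm
    exact h1'.unique h2
  rcases Set.eq_empty_or_nonempty I with hIe | ⟨s₀, hs₀⟩
  · exact ⟨1, Or.inl rfl, by simp [hIe]⟩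
  have hc_cont : ContinuousOn c I := fun u hu => ((hC u hu).continuousAt).continuousWithinAt
  have hsign : ∀ x ∈ I, ∀ y ∈ I, 0 < c x → 0 < c y := by
    intro x hx y hy hcx
    by_contra hcy
    push_neg at hcy
    obtain ⟨z, hz, hz0⟩ := hconv.isPreconnected.intermediate_value₂ hy hx
      hc_cont (continuousOn_const (c := (0 : ℝ))) hcy hcx.le
    exact hBd z hz hz0
  refine ⟨if 0 < c s₀ then (1 : ℝ) else -1, by split <;> simp, ?_⟩
  set ε : ℝ := if 0 < c s₀ then (1 : ℝ) else -1 with hε_def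
  have hε2 : ε ^ 2 = 1 := by rw [hε_def]; split <;> norm_num
  have hεc : ∀ s ∈ I, 0 < ε * c s := by
    intro s hs
    rw [hε_def]
    by_cases h0 : 0 < c s₀
    · simp only [if_pos h0, one_mul]
      exact hsign s₀ hs₀ s hs h0
    · simp only [if_neg h0]
      have hne := hBd s hs
      rcases lt_trichotomy (c s) 0 with h | h | h
      · linarith
      · exact absurd h hne
      · exact absurd (hsign s hs s₀ hs₀ h) h0
  intro s hs
  have hκs := hκpos s hs
  have hcs := hεc s hs
  set P : ℝ := κ s ^ 2 + τ s ^ 2 with hP_def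
  have hPpos : 0 < P := by positivity
  set S : ℝ := Real.sqrt (P ^ 3) with hS_def
  have hSpos : 0 < S := Real.sqrt_pos.mpr (by positivity)
  have hS2 : S ^ 2 = P ^ 3 := Real.sq_sqrt (by positivity)
  have key1 : c s * (τ' s * κ s - κ' s * τ s) = κ s * P * Real.cos θ := by
    have h1 := hderiv_eq s hs
    have h2 := hbal s hs
    rw [hP_def]
    linear_combination (κ s) * h1 - (κ' s) * h2
  have key2 : c s ^ 2 * P = κ s ^ 2 * Real.sin θ ^ 2 := by
    have h1 := hsum s hs
    have h2 := hbal s hs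
    rw [hP_def]
    linear_combination κ s ^ 2 * h1 + (τ s * c s + κ s * a s) * h2
  have hxpos : 0 < ε * c s * S := mul_pos hcs hSpos
  have hypos : 0 < κ s * P * Real.sin θ := by positivity
  have hsq : (ε * c s * S) ^ 2 = (κ s * P * Real.sin θ) ^ 2 := by
    linear_combination (c s ^ 2 * ε ^ 2) * hS2 + (c s ^ 2 * P ^ 3) * hε2 + P ^ 2 * key2
  have hεcS : ε * c s * S = κ s * P * Real.sin θ := by
    have h1 : ε * c s * S = Real.sqrt ((ε * c s * S) ^ 2) :=
      (Real.sqrt_sq hxpos.le).symm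
    rw [h1, hsq, Real.sqrt_sq hypos.le]
  have hc_ne : c s ≠ 0 := hBd s hs
  have hXsin : (τ' s * κ s - κ' s * τ s) * Real.sin θ = ε * Real.cos θ * S := by
    apply mul_left_cancel₀ hc_ne
    linear_combination Real.sin θ * key1 - Real.cos θ * hεcS
  rw [div_eq_iff (ne_of_gt hSpos)]
  field_simp
  linear_combination hXsin
end
end
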